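/- arXiv:1703.10210 — 3 statements merged into one kernel-verified Lean document; each statement's English description precedes it below -/
import Mathlib

section
/- Let H1, H2 be real separable Hilbert spaces and let X be a square-integrable random element of H1 ⊗ H2 with mean μ. Suppose orthonormal bases (f_j) of H1 and (g_k) of H2 make the scores χ_{jk} = ⟨X − μ, f_j ⊗ g_k⟩ uncorrelated for distinct index pairs. Then each f_j is an eigenvector of the marginal covariance operator C_S on H1 with eigenvalue λ_j = Σ_k η_{jk}, where η_{jk} = E[χ_{jk}^2] and C_S is defined by ⟨C_S u, v⟩ = Σ_k E[⟨X−μ, u ⊗ g_k⟩⟨X−μ, v ⊗ g_k⟩] for u, v ∈ H1 (equivalently C_S = tr_2(C), the partial trace of the covariance over H2). -/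
open MeasureTheory RealInnerProductSpace

/-- Under weak separability, each `f j` is an eigenvector of the
marginal covariance operator `C_S = tr₂(C)` with eigenvalue `λ_j = Σ_k η_{jk}`. -/
theorem weak_separability_marginal_eigenvectors
    {H1 H2 H : Type*}
    [NormedAddCommGroup H1] [InnerProductSpace ℝ H1]
    [NormedAddCommGroup H2] [InnerProductSpace ℝ H2]
    [NormedAddCommGroup H] [InnerProductSpace ℝ H]
    {Ω : Type*} [MeasurableSpace Ω] (P : Measure Ω) [IsProbabilityMeasure P]
    (X : Ω → H) (μ : H)
    (tp : H1 → H2 → H)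
    (h_tp : ∀ x1 x2 y1 y2, ⟪tp x1 x2, tp y1 y2⟫ = ⟪x1, y1⟫ * ⟪x2, y2⟫)
    (f : ℕ → H1) (g : ℕ → H2)
    (hf : Orthonormal ℝ f) (hg : Orthonormal ℝ g)
    (hf_total : ∀ v : H1, (∀ j, ⟪f j, v⟫ = 0) → v = 0)
    (huncorr : ∀ j k j' k', (j, k) ≠ (j', k') →
      (∫ ω, ⟪X ω - μ, tp (f j) (g k)⟫ * ⟪X ω - μ, tp (f j') (g k')⟫ ∂P) = 0)
    (CS : H1 →L[ℝ] H1)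
    (hCS : ∀ u v : H1, ⟪CS u, v⟫ =
      ∑' k, ∫ ω, ⟪X ω - μ, tp u (g k)⟫ * ⟪X ω - μ, tp v (g k)⟫ ∂P) :
    ∀ j, CS (f j) =
      (∑' k, ∫ ω, ⟪X ω - μ, tp (f j) (g k)⟫ ^ 2 ∂P) • f j := by
  intro j
  set lam := ∑' k, ∫ ω, ⟪X ω - μ, tp (f j) (g k)⟫ ^ 2 ∂P with hlam
  have h0 : ∀ i, ⟪f i, CS (f j) - lam • f j⟫ = 0 := by
    intro i
    rw [inner_sub_right, inner_smul_right, real_inner_comm (CS (f j)) (f i), hCS]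
    by_cases hij : i = j
    · subst hij
      have h1 : (∑' k, ∫ ω, ⟪X ω - μ, tp (f i) (g k)⟫ * ⟪X ω - μ, tp (f i) (g k)⟫ ∂P) = lam := by
        rw [hlam]
        exact tsum_congr fun k => by
          refine integral_congr_ae (Filter.Eventually.of_forall fun ω => ?_)
          ring
      rw [h1, orthonormal_iff_ite.mp hf i i]
      simp
    · have h1 : (∑' k, ∫ ω, ⟪X ω - μ, tp (f j) (g k)⟫ * ⟪X ω - μ, tp (f i) (g k)⟫ ∂P) = 0 := by
        rw [show (0:ℝ) = ∑' (_ : ℕ), (0:ℝ) by simp]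
        exact tsum_congr fun k => huncorr j k i k (by simp [Ne.symm hij])
      rw [h1, orthonormal_iff_ite.mp hf i j]
      simp [hij]
  have hv := hf_total _ h0
  have := sub_eq_zero.mp hv
  exact this
end

section
/- Strong separability implies weak separability: let X be a square-integrable random element of H1 ⊗ H2 with mean μ and covariance operator C. Suppose C = a · (C1 ⊗̃ C2) for trace-class positive self-adjoint operators C1 on H1, C2 on H2 with tr(C1) = tr(C2) = 1 and a > 0, where C1 ⊗̃ C2 denotes the tensor product operator. Let (ψ_j) and (φ_k) be orthonormal eigenbases of C1 and C2 respectively. Then the scores χ_{jk} = ⟨X − μ, ψ_j ⊗ φ_k⟩ are uncorrelated: E[χ_{jk} χ_{j'k'}] = 0 whenever (j,k) ≠ (j',k'). -/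
open MeasureTheory RealInnerProductSpace

/-- Strong separability (`C = a · C1 ⊗̃ C2` with unit-trace positive
self-adjoint trace-class factors) implies weak separability: the scores along
eigenbases of `C1` and `C2` are uncorrelated. -/
theorem strong_implies_weak_separability
    {H1 H2 H : Type*}
    [NormedAddCommGroup H1] [InnerProductSpace ℝ H1] [CompleteSpace H1]
    [NormedAddCommGroup H2] [InnerProductSpace ℝ H2] [CompleteSpace H2]
    [NormedAddCommGroup H] [InnerProductSpace ℝ H] [CompleteSpace H]
    {Ω : Type*} [MeasurableSpace Ω] (P : Measure Ω) [IsProbabilityMeasure P]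
    (X : Ω → H) (μ : H) (C : H →L[ℝ] H)
    (tp : H1 → H2 → H)
    (h_tp : ∀ x1 x2 y1 y2, ⟪tp x1 x2, tp y1 y2⟫ = ⟪x1, y1⟫ * ⟪x2, y2⟫)
    (hC : ∀ a b : H, ⟪C a, b⟫ = ∫ ω, ⟪X ω - μ, a⟫ * ⟪X ω - μ, b⟫ ∂P)
    (C1 : H1 →L[ℝ] H1) (C2 : H2 →L[ℝ] H2)
    (hC1sa : IsSelfAdjoint C1) (hC2sa : IsSelfAdjoint C2)
    (hC1pos : ∀ x, 0 ≤ ⟪C1 x, x⟫) (hC2pos : ∀ y, 0 ≤ ⟪C2 y, y⟫)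
    (a : ℝ) (ha : 0 < a)
    -- strong separability: C = a · (C1 ⊗̃ C2)
    (hsep : ∀ (x : H1) (y : H2), C (tp x y) = a • tp (C1 x) (C2 y))
    -- orthonormal eigenbases of C1 and C2
    (ψ : ℕ → H1) (φ : ℕ → H2)
    (hψ : Orthonormal ℝ ψ) (hφ : Orthonormal ℝ φ)
    (lam gam : ℕ → ℝ)
    (heig1 : ∀ j, C1 (ψ j) = lam j • ψ j)
    (heig2 : ∀ k, C2 (φ k) = gam k • φ k)
    -- unit traces: tr(C1) = tr(C2) = 1
    (htr1 : ∑' j, lam j = 1) (htr2 : ∑' k, gam k = 1) :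
    ∀ j k j' k', (j, k) ≠ (j', k') →
      (∫ ω, ⟪X ω - μ, tp (ψ j) (φ k)⟫ * ⟪X ω - μ, tp (ψ j') (φ k')⟫ ∂P) = 0 := by
  intro j k j' k' hne
  have h1 : j ≠ j' ∨ k ≠ k' := by
    by_contra h
    push_neg at h
    exact hne (by rw [h.1, h.2])
  rw [← hC, hsep, heig1, heig2, real_inner_smul_left, h_tp,
    real_inner_smul_left, real_inner_smul_left]
  rcases h1 with h | h
  · rw [hψ.2 h]; ring
  · rw [hφ.2 h]; ring
end

section
/- Generalized uncorrelatedness of marginal projection scores (no weak separability assumed): let X be a square-integrable random element of H1 ⊗ H2 with mean μ and covariance C, let (ψ_j) be an orthonormal eigenbasis of the marginal covariance C_S = tr_2(C), and (φ_k) any orthonormal basis of H2, with scores χ_{jk} = ⟨X−μ, ψ_j ⊗ φ_k⟩. Then for j ≠ j', Σ_{k=1}^∞ E[χ_{jk} χ_{j'k}] = 0, the series converging absolutely. -/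
open MeasureTheory RealInnerProductSpace

/-- Bessel-type bound: for any vector `w` in `H` and unit-type tensor directions
`tp u (φ k)`, the finite sum of squared inner products is bounded. -/
theorem tensor_bessel_bound
    {H2 H : Type*}
    [NormedAddCommGroup H2] [InnerProductSpace ℝ H2]
    [NormedAddCommGroup H] [InnerProductSpace ℝ H]
    {H1 : Type*} [NormedAddCommGroup H1] [InnerProductSpace ℝ H1]
    (tp : H1 → H2 → H)
    (h_tp : ∀ x1 x2 y1 y2, ⟪tp x1 x2, tp y1 y2⟫ = ⟪x1, y1⟫ * ⟪x2, y2⟫)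
    (φ : HilbertBasis ℕ ℝ H2) (u : H1) (w : H) (s : Finset ℕ) :
    ∑ k ∈ s, ⟪w, tp u (φ k)⟫ ^ 2 ≤ ‖w‖ ^ 2 * ‖u‖ ^ 2 := by
  set a : ℕ → ℝ := fun k => ⟪w, tp u (φ k)⟫ with ha
  set v : H := ∑ k ∈ s, a k • tp u (φ k) with hv
  set S : ℝ := ∑ k ∈ s, a k ^ 2 with hS
  have hφ : ∀ k k' : ℕ, ⟪(φ k : H2), (φ k' : H2)⟫ = if k = k' then 1 else 0 :=
    orthonormal_iff_ite.mp φ.orthonormal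
  have hwv : ⟪w, v⟫ = S := by
    rw [hv, inner_sum]
    refine Finset.sum_congr rfl fun k hk => ?_
    rw [real_inner_smul_right, sq]
  have hvv : ⟪v, v⟫ = S * ‖u‖ ^ 2 := by
    rw [hv, sum_inner, hS, Finset.sum_mul]
    refine Finset.sum_congr rfl fun k hk => ?_
    rw [inner_sum]
    have : ∀ k' ∈ s, ⟪a k • tp u (φ k), a k' • tp u (φ k')⟫
        = if k' = k then a k ^ 2 * ‖u‖ ^ 2 else 0 := by
      intro k' _
      rw [real_inner_smul_left, real_inner_smul_right, h_tp, hφ,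
        real_inner_self_eq_norm_sq]
      by_cases h : k = k'
      · subst h; simp [sq]; ring
      · simp [h, Ne.symm h]
    rw [Finset.sum_congr rfl this, Finset.sum_ite_eq' s k _, if_pos hk]
  have hSnn : 0 ≤ S := Finset.sum_nonneg fun k _ => sq_nonneg _
  rcases eq_or_lt_of_le hSnn with h0 | hpos
  · rw [← h0]; positivity
  · have hcs : ⟪w, v⟫ ≤ ‖w‖ * ‖v‖ := real_inner_le_norm w v
    have hnv : ‖v‖ ^ 2 = S * ‖u‖ ^ 2 := by
      rw [← real_inner_self_eq_norm_sq, hvv]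
    have hS2 : S ^ 2 ≤ ‖w‖ ^ 2 * (S * ‖u‖ ^ 2) := by
      calc S ^ 2 = ⟪w, v⟫ ^ 2 := by rw [hwv]
        _ ≤ (‖w‖ * ‖v‖) ^ 2 := by
            have h1 : 0 ≤ ⟪w, v⟫ := by rw [hwv]; exact hSnn
            exact pow_le_pow_left₀ h1 hcs 2
        _ = ‖w‖ ^ 2 * ‖v‖ ^ 2 := by ring
        _ = ‖w‖ ^ 2 * (S * ‖u‖ ^ 2) := by rw [hnv]
    nlinarith [hS2, hpos]

/-- Generalized uncorrelatedness of marginal projection scores (no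
weak separability assumed): if `(ψ_j)` is an orthonormal eigenbasis of the
marginal covariance `C_S = tr₂(C)` and `(φ_k)` any orthonormal basis of `H2`,
then for `j ≠ j'`, `Σ_k E[χ_{jk} χ_{j'k}] = 0`, absolutely convergent. -/
theorem marginal_scores_generalized_uncorrelated
    {H1 H2 H : Type*}
    [NormedAddCommGroup H1] [InnerProductSpace ℝ H1]
    [NormedAddCommGroup H2] [InnerProductSpace ℝ H2]
    [NormedAddCommGroup H] [InnerProductSpace ℝ H]
    {Ω : Type*} [MeasurableSpace Ω] (P : Measure Ω) [IsProbabilityMeasure P]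
    (X : Ω → H) (μ : H)
    (tp : H1 → H2 → H)
    (h_tp : ∀ x1 x2 y1 y2, ⟪tp x1 x2, tp y1 y2⟫ = ⟪x1, y1⟫ * ⟪x2, y2⟫)
    (ψ : ℕ → H1) (hψ : Orthonormal ℝ ψ)
    (φ : HilbertBasis ℕ ℝ H2)
    -- integrability of X
    (hX : Integrable (fun ω => ‖X ω - μ‖ ^ 2) P)
    -- C_S = tr₂(C): the marginal covariance operator
    (CS : H1 →L[ℝ] H1)
    (hCS : ∀ u v : H1, ⟪CS u, v⟫ =
      ∑' k, ∫ ω, ⟪X ω - μ, tp u (φ k)⟫ * ⟪X ω - μ, tp v (φ k)⟫ ∂P)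
    -- (ψ_j) is an eigenbasis of C_S
    (lam : ℕ → ℝ) (heig : ∀ j, CS (ψ j) = lam j • ψ j) :
    ∀ j j', j ≠ j' →
      (Summable fun k =>
        |∫ ω, ⟪X ω - μ, tp (ψ j) (φ k)⟫ * ⟪X ω - μ, tp (ψ j') (φ k)⟫ ∂P|) ∧
      (∑' k, ∫ ω, ⟪X ω - μ, tp (ψ j) (φ k)⟫ * ⟪X ω - μ, tp (ψ j') (φ k)⟫ ∂P) = 0 := by
  intro j j' hjj'
  -- pointwise score functions
  set χ : ℕ → ℕ → Ω → ℝ := fun i k ω => ⟪X ω - μ, tp (ψ i) (φ k)⟫ with hχ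
  -- majorant lintegrals
  set m : ℕ → ENNReal := fun k =>
    ∫⁻ ω, ENNReal.ofReal (χ j k ω ^ 2 + χ j' k ω ^ 2) ∂P with hm
  set C : ENNReal := ∫⁻ ω, ENNReal.ofReal (2 * ‖X ω - μ‖ ^ 2) ∂P with hC
  have hnorm1 : ∀ i, ‖ψ i‖ = 1 := hψ.1
  -- pointwise Bessel bound for finite sums
  have hbessel : ∀ (s : Finset ℕ) (ω : Ω),
      ∑ k ∈ s, (χ j k ω ^ 2 + χ j' k ω ^ 2) ≤ 2 * ‖X ω - μ‖ ^ 2 := by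
    intro s ω
    rw [Finset.sum_add_distrib]
    have h1 := tensor_bessel_bound tp h_tp φ (ψ j) (X ω - μ) s
    have h2 := tensor_bessel_bound tp h_tp φ (ψ j') (X ω - μ) s
    rw [hnorm1 j] at h1; rw [hnorm1 j'] at h2
    simp only [one_pow, mul_one] at h1 h2
    calc (∑ k ∈ s, χ j k ω ^ 2) + ∑ k ∈ s, χ j' k ω ^ 2
        ≤ ‖X ω - μ‖ ^ 2 + ‖X ω - μ‖ ^ 2 := add_le_add h1 h2
      _ = 2 * ‖X ω - μ‖ ^ 2 := by ring
  -- superadditivity of lintegral over finite sums (no measurability needed)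
  have hsuper : ∀ s : Finset ℕ,
      ∑ k ∈ s, m k ≤ ∫⁻ ω, ENNReal.ofReal (∑ k ∈ s, (χ j k ω ^ 2 + χ j' k ω ^ 2)) ∂P := by
    intro s
    induction s using Finset.cons_induction with
    | empty => simp
    | cons k s hk ih =>
      rw [Finset.sum_cons]
      calc m k + ∑ x ∈ s, m x
          ≤ m k + ∫⁻ ω, ENNReal.ofReal (∑ x ∈ s, (χ j x ω ^ 2 + χ j' x ω ^ 2)) ∂P :=
            add_le_add le_rfl ih
        _ ≤ ∫⁻ ω, (ENNReal.ofReal (χ j k ω ^ 2 + χ j' k ω ^ 2)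
              + ENNReal.ofReal (∑ x ∈ s, (χ j x ω ^ 2 + χ j' x ω ^ 2))) ∂P :=
            le_lintegral_add _ _
        _ = ∫⁻ ω, ENNReal.ofReal (∑ x ∈ Finset.cons k s hk, (χ j x ω ^ 2 + χ j' x ω ^ 2)) ∂P := by
            refine lintegral_congr fun ω => ?_
            rw [Finset.sum_cons, ← ENNReal.ofReal_add (by positivity)
              (Finset.sum_nonneg fun x _ => by positivity)]
  -- finite total bound
  have hboundC : ∀ s : Finset ℕ, ∑ k ∈ s, m k ≤ C := by
    intro s
    refine (hsuper s).trans (lintegral_mono fun ω => ?_)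
    exact ENNReal.ofReal_le_ofReal (hbessel s ω)
  have hCfin : C < ⊤ := by
    have hfin := hX.hasFiniteIntegral
    rw [hasFiniteIntegral_iff_norm] at hfin
    have heq : C = 2 * ∫⁻ ω, ENNReal.ofReal ‖‖X ω - μ‖ ^ 2‖ ∂P := by
      rw [hC, ← lintegral_const_mul' 2 _ (by norm_num)]
      refine lintegral_congr fun ω => ?_
      rw [Real.norm_of_nonneg (by positivity), ENNReal.ofReal_mul (by norm_num)]
      norm_num
    rw [heq]
    exact ENNReal.mul_lt_top (by norm_num) hfin
  have htsum_ne : ∑' k, m k ≠ ⊤ := by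
    rw [ENNReal.tsum_eq_iSup_sum]
    exact ne_top_of_le_ne_top hCfin.ne (iSup_le hboundC)
  have hm_ne : ∀ k, m k ≠ ⊤ := fun k =>
    ne_top_of_le_ne_top htsum_ne (ENNReal.le_tsum k)
  -- the key per-term bound
  have habs : ∀ k, |∫ ω, χ j k ω * χ j' k ω ∂P| ≤ (m k).toReal := by
    intro k
    calc |∫ ω, χ j k ω * χ j' k ω ∂P| = ‖∫ ω, χ j k ω * χ j' k ω ∂P‖ :=
        (Real.norm_eq_abs _).symm
      _ ≤ (∫⁻ ω, ENNReal.ofReal ‖χ j k ω * χ j' k ω‖ ∂P).toReal :=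
          norm_integral_le_lintegral_norm _
      _ ≤ (m k).toReal := by
          refine ENNReal.toReal_mono (hm_ne k) (lintegral_mono fun ω => ?_)
          refine ENNReal.ofReal_le_ofReal ?_
          rw [Real.norm_eq_abs]
          rcases abs_cases (χ j k ω * χ j' k ω) with ⟨h, _⟩ | ⟨h, _⟩ <;>
            nlinarith [sq_nonneg (χ j k ω - χ j' k ω), sq_nonneg (χ j k ω + χ j' k ω)]
  have hmsum : Summable fun k => (m k).toReal := ENNReal.summable_toReal htsum_ne
  have hsummable : Summable fun k => |∫ ω, χ j k ω * χ j' k ω ∂P| :=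
    Summable.of_nonneg_of_le (fun k => abs_nonneg _) habs hmsum
  refine ⟨hsummable, ?_⟩
  have h0 := hCS (ψ j) (ψ j')
  rw [← h0, heig j, real_inner_smul_left, hψ.2 hjj', mul_zero]
end
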